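/- Let P be a normal logic program over n atoms, F_P = Fin n \ LM(P⁺) its set of stable false atoms, and P' the precomputed program. Then for every model I' ⊆ Fin n \ F_P, taking I = I' (so that every atom of F_P is false in I), the least models of the reducts coincide: LM(P'^{I'}) = LM(P^{I}). -/

import Mathlib

open Finset Matrix

noncomputable section

/-- componentwise `x ↦ min x 1` -/
def min1 {k : Type*} (v : k → ℝ) : k → ℝ := fun j => min (v j) 1

/-- the vectorized model `u_I ∈ {0,1}^n` of a model `I` -/
def vecI {n : ℕ} (I : Finset (Fin n)) : Fin n → ℝ := fun i => if i ∈ I then 1 else 0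

/-- the dualized vector `u^δ = [u ; 1-u] ∈ ℝ^{2n}` -/
def dvec {n : ℕ} (u : Fin n → ℝ) : Fin n ⊕ Fin n → ℝ := Sum.elim u fun i => 1 - u i

/-- the matrix `D ∈ ℝ^{n×m}` of the matricized program: `D(i,j) = 1` iff `h j = i` -/
def Dmat {n m : ℕ} (hd : Fin m → Fin n) : Matrix (Fin n) (Fin m) ℝ :=
  Matrix.of fun i j => if hd j = i then 1 else 0

/-- the matrix `Q = [Q¹ Q²] ∈ ℝ^{m×2n}` of the matricized program -/
def Qmat {n m : ℕ} (pos neg : Fin m → Finset (Fin n)) :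
    Matrix (Fin m) (Fin n ⊕ Fin n) ℝ :=
  Matrix.of fun j => Sum.elim (fun i => if i ∈ pos j then (1 : ℝ) else 0)
    (fun i => if i ∈ neg j then (1 : ℝ) else 0)

/-- a half of the matrix `Q`: `Qhalf pos = Q¹`, `Qhalf neg = Q²` -/
def Qhalf {n m : ℕ} (b : Fin m → Finset (Fin n)) : Matrix (Fin m) (Fin n) ℝ :=
  Matrix.of fun j i => if i ∈ b j then 1 else 0

/-- `I` satisfies the body of rule `j` -/
def bodyTrue {n m : ℕ} (pos neg : Fin m → Finset (Fin n)) (I : Finset (Fin n))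
    (j : Fin m) : Prop :=
  pos j ⊆ I ∧ neg j ∩ I = ∅

instance {n m : ℕ} (pos neg : Fin m → Finset (Fin n)) (I : Finset (Fin n)) :
    DecidablePred (bodyTrue pos neg I) := fun j =>
  inferInstanceAs (Decidable (pos j ⊆ I ∧ neg j ∩ I = ∅))

/-- `I` is a supported model of the program -/
def isSupported {n m : ℕ} (hd : Fin m → Fin n) (pos neg : Fin m → Finset (Fin n))
    (I : Finset (Fin n)) : Prop :=
  ∀ i, i ∈ I ↔ ∃ j, hd j = i ∧ bodyTrue pos neg I j

/-- the Euclidean norm `‖·‖₂` on `ℝ^k` -/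
def euclidNorm {k : Type*} [Fintype k] (v : k → ℝ) : ℝ := Real.sqrt (∑ i, v i ^ 2)

/-- the vector `d = D(1 - min₁(Q(1 - u^δ)))` -/
def dvecOf {n m : ℕ} (hd : Fin m → Fin n) (pos neg : Fin m → Finset (Fin n))
    (u : Fin n → ℝ) : Fin n → ℝ :=
  (Dmat hd).mulVec fun j => 1 - min1 ((Qmat pos neg).mulVec fun x => 1 - dvec u x) j

open scoped Classical in
/-- the least model of the definite program whose rules are `hd j ← ps j`
for exactly those `j` with `act j`: the smallest set `J` of atoms such that
for every such rule, `ps j ⊆ J` implies `hd j ∈ J`. -/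
def LMFor {n m : ℕ} (hd : Fin m → Fin n) (ps : Fin m → Finset (Fin n))
    (act : Fin m → Prop) : Finset (Fin n) :=
  Finset.univ.filter fun a =>
    ∀ J : Finset (Fin n), (∀ j, act j → ps j ⊆ J → hd j ∈ J) → a ∈ J

/-- `I` is a stable model: the least model of the Gelfond–Lifschitz reduct `P^I` equals `I` -/
def isStable {n m : ℕ} (hd : Fin m → Fin n) (pos neg : Fin m → Finset (Fin n))
    (I : Finset (Fin n)) : Prop :=
  LMFor hd pos (fun j => neg j ∩ I = ∅) = I

/-- with `F_P = Fin n \ LM(P⁺)` and `P'` the precomputed program, for every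
model `I' ⊆ Fin n \ F_P`, taking `I = I'`, the least models of the reducts coincide:
`LM(P'^{I'}) = LM(P^I)`. -/
theorem stmt12 {n m : ℕ} (hd : Fin m → Fin n) (pos neg : Fin m → Finset (Fin n))
    (F : Finset (Fin n)) (hF : F = Finset.univ \ LMFor hd pos (fun _ => True))
    (I' : Finset (Fin n)) (hI' : I' ⊆ Finset.univ \ F) :
    LMFor hd pos (fun j => (hd j ∉ F ∧ pos j ∩ F = ∅) ∧ (neg j \ F) ∩ I' = ∅)
      = LMFor hd pos (fun j => neg j ∩ I' = ∅) := by
  classical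
  have mem_LM : ∀ (act : Fin m → Prop) (a : Fin n),
      a ∈ LMFor hd pos act ↔
        ∀ J : Finset (Fin n), (∀ j, act j → pos j ⊆ J → hd j ∈ J) → a ∈ J := by
    intro act a
    simp [LMFor]
  have closed : ∀ (act : Fin m → Prop) (j : Fin m), act j →
      pos j ⊆ LMFor hd pos act → hd j ∈ LMFor hd pos act := by
    intro act j hj hps
    rw [mem_LM]
    intro J hJ
    exact hJ j hj fun x hx => (mem_LM act x).1 (hps hx) J hJ
  have hIF : ∀ x, x ∈ I' → x ∉ F := fun x hx => (Finset.mem_sdiff.1 (hI' hx)).2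
  have hneg : ∀ j, ((neg j \ F) ∩ I' = ∅) ↔ (neg j ∩ I' = ∅) := by
    intro j
    constructor <;> intro h <;> rw [Finset.eq_empty_iff_forall_notMem] at h ⊢ <;>
      intro x hx <;> rw [Finset.mem_inter] at hx
    · exact h x (Finset.mem_inter.2 ⟨Finset.mem_sdiff.2 ⟨hx.1, hIF x hx.2⟩, hx.2⟩)
    · exact h x (Finset.mem_inter.2 ⟨(Finset.mem_sdiff.1 hx.1).1, hx.2⟩)
  ext a
  rw [mem_LM, mem_LM]
  constructor
  · intro h J hJ
    exact h J fun j hj => hJ j ((hneg j).1 hj.2)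
  · intro h J hJ
    set T := LMFor hd pos (fun _ => True) with hT
    have hJ0 : ∀ j, (neg j ∩ I' = ∅) → pos j ⊆ J ∩ T → hd j ∈ J ∩ T := by
      intro j hj hps
      have hpsT : pos j ⊆ T := fun x hx => (Finset.mem_inter.1 (hps hx)).2
      have hhdT : hd j ∈ T := closed _ j trivial hpsT
      have hhdF : hd j ∉ F := by
        rw [hF]; simp [hhdT, hT]; exact hhdT
      have hposF : pos j ∩ F = ∅ := by
        rw [Finset.eq_empty_iff_forall_notMem]
        intro x hx
        rw [Finset.mem_inter] at hx
        have := hpsT hx.1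
        rw [hF, Finset.mem_sdiff] at hx
        exact hx.2.2 this
      have hhdJ : hd j ∈ J :=
        hJ j ⟨⟨hhdF, hposF⟩, (hneg j).2 hj⟩ fun x hx => (Finset.mem_inter.1 (hps hx)).1
      exact Finset.mem_inter.2 ⟨hhdJ, hhdT⟩
    exact (Finset.mem_inter.1 (h (J ∩ T) hJ0)).1
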